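/- Termwise q-limit of ₂φ₁: for real α, β, γ (γ not a non-positive integer) and complex x with |x| < 1, lim_{q → 1⁻} ₂φ₁(q^α, q^β; q^γ; q, x) = ₂F₁(α, β; γ; x), where the limit is over real q ∈ (0,1). -/

import Mathlib

noncomputable def qPoch (a q : ℂ) (n : ℕ) : ℂ := ∏ j ∈ Finset.range n, (1 - a * q ^ j)

noncomputable def phi21 (a b c q x : ℂ) : ℂ :=
  ∑' n : ℕ, qPoch a q n * qPoch b q n / (qPoch q q n * qPoch c q n) * x ^ n

noncomputable def risingC (a : ℂ) (n : ℕ) : ℂ := ∏ j ∈ Finset.range n, (a + j)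

/-- Gauss hypergeometric series over ℂ. -/
noncomputable def F21 (a b c : ℂ) (x : ℂ) : ℂ :=
  ∑' n : ℕ, risingC a n * risingC b n / ((n.factorial : ℂ) * risingC c n) * x ^ n

open Filter Set Finset

namespace Stmt7Aux

lemma g_tendsto (s : ℝ) :
    Tendsto (fun q : ℝ => (1 - q ^ s) / (1 - q)) (nhdsWithin 1 (Ioo (0:ℝ) 1)) (nhds s) := by
  have hd : HasDerivAt (fun q : ℝ => q ^ s) s 1 := by
    have := Real.hasDerivAt_rpow_const (x := 1) (p := s) (Or.inl one_ne_zero)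
    simpa using this
  have h1 := hasDerivAt_iff_tendsto_slope.mp hd
  have h2 : Tendsto (slope (fun q : ℝ => q ^ s) 1) (nhdsWithin 1 (Ioo (0:ℝ) 1)) (nhds s) :=
    h1.mono_left (nhdsWithin_mono _ (fun q hq => ne_of_lt hq.2))
  refine h2.congr fun q => ?_
  rw [slope_def_field, Real.one_rpow, ← neg_div_neg_eq]
  ring_nf

lemma bern {u t : ℝ} (hu0 : 0 ≤ u) (ht : 1 ≤ t) : 1 - u ^ t ≤ t * (1 - u) := by
  have h := one_add_mul_self_le_rpow_one_add (s := u - 1) (by linarith) ht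
  have e : 1 + (u - 1) = u := by ring
  rw [e] at h
  nlinarith [h]

lemma lemC {q a b : ℝ} (hq0 : 0 < q) (hq1 : q < 1) (ha : 0 ≤ a) (hb : 0 < b) :
    1 - q ^ a ≤ max 1 (a / b) * (1 - q ^ b) := by
  have hqb : 0 < q ^ b := Real.rpow_pos_of_pos hq0 b
  have hqb1 : q ^ b < 1 := Real.rpow_lt_one hq0.le hq1 hb
  rcases le_or_gt a b with hab | hab
  · have : q ^ b ≤ q ^ a := Real.rpow_le_rpow_of_exponent_ge hq0 hq1.le hab
    have h1 : (1:ℝ) ≤ max 1 (a/b) := le_max_left _ _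
    nlinarith
  · have ht : 1 ≤ a / b := (one_le_div hb).mpr hab.le
    have key : 1 - (q ^ b) ^ (a/b) ≤ (a/b) * (1 - q ^ b) := bern hqb.le ht
    rw [← Real.rpow_mul hq0.le] at key
    have e : b * (a / b) = a := by field_simp
    rw [e] at key
    calc 1 - q ^ a ≤ (a/b) * (1 - q ^ b) := key
      _ ≤ max 1 (a/b) * (1 - q ^ b) := by
          apply mul_le_mul_of_nonneg_right (le_max_right _ _) (by linarith)

lemma lemB {q s : ℝ} (hq0 : 0 < q) (hq1 : q < 1) :
    1 - q ^ |s| ≤ |1 - q ^ s| := by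
  rcases le_or_gt 0 s with hs | hs
  · rw [abs_of_nonneg hs, abs_of_nonneg (by
      have : q ^ s ≤ 1 := Real.rpow_le_one hq0.le hq1.le hs
      linarith)]
  · rw [abs_of_neg hs]
    have h1 : (1:ℝ) < q ^ s := Real.one_lt_rpow_iff_of_pos hq0 |>.mpr (Or.inr ⟨hq1, hs⟩)
    rw [abs_of_neg (by linarith)]
    have e : q ^ s * q ^ (-s) = 1 := by
      rw [← Real.rpow_add hq0]; simp
    nlinarith [Real.rpow_pos_of_pos hq0 (-s)]

lemma lemA {q s : ℝ} (hq : 1/2 ≤ q) (hq1 : q < 1) :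
    |1 - q ^ s| ≤ 2 ^ (|s| - s) * (1 - q ^ |s|) := by
  have hq0 : (0:ℝ) < q := by linarith
  rcases le_or_gt 0 s with hs | hs
  · rw [abs_of_nonneg hs, sub_self, Real.rpow_zero, one_mul,
      abs_of_nonneg (by
        have : q ^ s ≤ 1 := Real.rpow_le_one hq0.le hq1.le hs
        linarith)]
  · have h1 : (1:ℝ) < q ^ s := Real.one_lt_rpow_iff_of_pos hq0 |>.mpr (Or.inr ⟨hq1, hs⟩)
    rw [abs_of_neg (by linarith), abs_of_neg hs]
    have e : q ^ s * q ^ (-s) = 1 := by rw [← Real.rpow_add hq0]; simp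
    have key : q ^ s - 1 = q ^ s * (1 - q ^ (-s)) := by rw [mul_sub, e, mul_one]
    rw [neg_sub, key]
    have hqs : q ^ s ≤ 2 ^ (-s) := by
      have e2 : q ^ s = (q⁻¹) ^ (-s) := by
        rw [Real.inv_rpow hq0.le, Real.rpow_neg hq0.le, inv_inv]
      rw [e2]
      exact Real.rpow_le_rpow (by positivity) (by rw [inv_le_comm₀ hq0 (by norm_num)]; linarith) (by linarith)
    have h2 : (2:ℝ) ^ (-s) ≤ 2 ^ (-s - s) := by
      apply Real.rpow_le_rpow_of_exponent_le (by norm_num)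
      linarith
    have hpos : 0 ≤ 1 - q ^ (-s) := by
      have : q ^ (-s) ≤ 1 := Real.rpow_le_one hq0.le hq1.le (by linarith)
      linarith
    calc q ^ s * (1 - q ^ (-s)) ≤ 2 ^ (-s) * (1 - q ^ (-s)) :=
          mul_le_mul_of_nonneg_right hqs hpos
      _ ≤ 2 ^ (-s - s) * (1 - q ^ (-s)) := mul_le_mul_of_nonneg_right h2 hpos

noncomputable def Pq (s : ℝ) (n : ℕ) (q : ℝ) : ℝ := ∏ j ∈ Finset.range n, (1 - q ^ s * q ^ j)

lemma qPoch_cast (s : ℝ) (n : ℕ) (q : ℝ) :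
    qPoch ((q ^ s : ℝ) : ℂ) (q : ℂ) n = ((Pq s n q : ℝ) : ℂ) := by
  simp [qPoch, Pq]

lemma qPoch_cast' (n : ℕ) (q : ℝ) :
    qPoch (q : ℂ) (q : ℂ) n = ((Pq 1 n q : ℝ) : ℂ) := by
  simp [qPoch, Pq, Real.rpow_one]

lemma risingC_cast (a : ℝ) (n : ℕ) :
    risingC (a : ℂ) n = ((∏ j ∈ Finset.range n, (a + j) : ℝ) : ℂ) := by
  simp [risingC]

lemma Pq_div (s : ℝ) (n : ℕ) (q : ℝ) :
    (∏ j ∈ Finset.range n, ((1 - q ^ s * q ^ j) / (1 - q))) = Pq s n q / (1 - q) ^ n := by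
  rw [Finset.prod_div_distrib, Finset.prod_const, Pq, Finset.card_range]

lemma div_div_cancel_aux (a b e : ℝ) (he : e ≠ 0) : (a / e) / (b / e) = a / b := by
  rw [div_div_div_comm, div_self he, div_one]

lemma gprod_tendsto (s : ℝ) (n : ℕ) :
    Tendsto (fun q : ℝ => ∏ j ∈ Finset.range n, ((1 - q ^ s * q ^ j) / (1 - q)))
      (nhdsWithin 1 (Ioo (0:ℝ) 1)) (nhds (∏ j ∈ Finset.range n, (s + j))) := by
  apply tendsto_finset_prod
  intro j _
  refine Filter.Tendsto.congr' ?_ (g_tendsto (s + j))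
  filter_upwards [self_mem_nhdsWithin] with q hq
  rw [Real.rpow_add hq.1, Real.rpow_natCast]

lemma tendsto_R (α β γ : ℝ) (hγ : ∀ n : ℕ, γ ≠ -(n : ℝ)) (n : ℕ) :
    Tendsto (fun q : ℝ => (Pq α n q * Pq β n q) / (Pq 1 n q * Pq γ n q))
      (nhdsWithin 1 (Ioo (0:ℝ) 1))
      (nhds ((∏ j ∈ range n, (α + j)) * (∏ j ∈ range n, (β + j)) /
        ((∏ j ∈ range n, ((1:ℝ) + j)) * (∏ j ∈ range n, (γ + j))))) := by
  have hne : (∏ j ∈ range n, ((1:ℝ) + j)) * (∏ j ∈ range n, (γ + j)) ≠ 0 := by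
    apply mul_ne_zero
    · exact ne_of_gt (Finset.prod_pos fun j _ => by positivity)
    · rw [Finset.prod_ne_zero_iff]
      intro j _ h
      exact hγ j (by linarith)
  have h := Filter.Tendsto.div ((gprod_tendsto α n).mul (gprod_tendsto β n))
    ((gprod_tendsto 1 n).mul (gprod_tendsto γ n)) hne
  refine Filter.Tendsto.congr' ?_ h
  filter_upwards [self_mem_nhdsWithin] with q hq
  have hc : ((1 - q) ^ n) * ((1 - q) ^ n) ≠ 0 := by
    have : (1:ℝ) - q ≠ 0 := by have := hq.2; intro h; linarith [sub_eq_zero.mp h]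
    positivity
  simp only [Pi.div_apply]
  rw [Pq_div, Pq_div, Pq_div, Pq_div, div_mul_div_comm, div_mul_div_comm,
    div_div_cancel_aux _ _ _ hc]

lemma rpow_ne_one' {q s : ℝ} (hq0 : 0 < q) (hq1 : q < 1) (hs : s ≠ 0) : q ^ s ≠ 1 := by
  rcases hs.lt_or_gt with h | h
  · exact ne_of_gt ((Real.one_lt_rpow_iff_of_pos hq0).mpr (Or.inr ⟨hq1, h⟩))
  · exact ne_of_lt (Real.rpow_lt_one hq0.le hq1 h)

noncomputable def Dfac (α β γ : ℝ) (j : ℕ) : ℝ :=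
  (2 ^ (|α + j| - (α + j)) * max 1 (|α + j| / ((j:ℝ) + 1))) *
  (2 ^ (|β + j| - (β + j)) * max 1 (|β + j| / |γ + j|))

lemma Dfac_pos (α β γ : ℝ) (j : ℕ) : 0 < Dfac α β γ j := by
  have h1 : (0:ℝ) < max 1 (|α + j| / ((j:ℝ) + 1)) := lt_of_lt_of_le one_pos (le_max_left _ _)
  have h2 : (0:ℝ) < max 1 (|β + j| / |γ + j|) := lt_of_lt_of_le one_pos (le_max_left _ _)
  have h3 : (0:ℝ) < 2 ^ (|α + (j:ℝ)| - (α + j)) := Real.rpow_pos_of_pos (by norm_num) _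
  have h4 : (0:ℝ) < 2 ^ (|β + (j:ℝ)| - (β + j)) := Real.rpow_pos_of_pos (by norm_num) _
  exact mul_pos (mul_pos h3 h1) (mul_pos h4 h2)

lemma factor_bound {α β γ q : ℝ} (j : ℕ) (hγj : γ + (j:ℝ) ≠ 0) (hq : 1/2 ≤ q) (hq1 : q < 1) :
    |(1 - q ^ α * q ^ j) * (1 - q ^ β * q ^ j)| ≤
      Dfac α β γ j * |(1 - q * q ^ j) * (1 - q ^ γ * q ^ j)| := by
  have hq0 : (0:ℝ) < q := by linarith
  have e : ∀ s : ℝ, q ^ s * q ^ j = q ^ (s + (j:ℝ)) := fun s => by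
    rw [Real.rpow_add hq0, Real.rpow_natCast]
  have e1 : q * q ^ j = q ^ ((j:ℝ) + 1) := by
    rw [Real.rpow_add hq0, Real.rpow_natCast, Real.rpow_one, mul_comm]
  rw [e α, e β, e γ, e1, abs_mul, abs_mul]
  have hj1 : (0:ℝ) < (j:ℝ) + 1 := by positivity
  have hd1 : 0 ≤ 1 - q ^ ((j:ℝ) + 1) := by
    have : q ^ ((j:ℝ)+1) ≤ 1 := Real.rpow_le_one hq0.le hq1.le hj1.le
    linarith
  have hA : |1 - q ^ (α + (j:ℝ))| ≤
      (2 ^ (|α + (j:ℝ)| - (α + j)) * max 1 (|α + (j:ℝ)| / ((j:ℝ) + 1))) * (1 - q ^ ((j:ℝ)+1)) := by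
    calc |1 - q ^ (α + (j:ℝ))| ≤ 2 ^ (|α + (j:ℝ)| - (α + j)) * (1 - q ^ |α + (j:ℝ)|) :=
          lemA hq hq1
      _ ≤ 2 ^ (|α + (j:ℝ)| - (α + j)) *
            (max 1 (|α + (j:ℝ)| / ((j:ℝ) + 1)) * (1 - q ^ ((j:ℝ)+1))) := by
          apply mul_le_mul_of_nonneg_left (lemC hq0 hq1 (abs_nonneg _) hj1)
          positivity
      _ = _ := by ring
  have hB : |1 - q ^ (β + (j:ℝ))| ≤
      (2 ^ (|β + (j:ℝ)| - (β + j)) * max 1 (|β + (j:ℝ)| / |γ + (j:ℝ)|)) * |1 - q ^ (γ + (j:ℝ))| := by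
    calc |1 - q ^ (β + (j:ℝ))| ≤ 2 ^ (|β + (j:ℝ)| - (β + j)) * (1 - q ^ |β + (j:ℝ)|) :=
          lemA hq hq1
      _ ≤ 2 ^ (|β + (j:ℝ)| - (β + j)) *
            (max 1 (|β + (j:ℝ)| / |γ + (j:ℝ)|) * (1 - q ^ |γ + (j:ℝ)|)) := by
          apply mul_le_mul_of_nonneg_left (lemC hq0 hq1 (abs_nonneg _) (abs_pos.mpr hγj))
          positivity
      _ ≤ 2 ^ (|β + (j:ℝ)| - (β + j)) *
            (max 1 (|β + (j:ℝ)| / |γ + (j:ℝ)|) * |1 - q ^ (γ + (j:ℝ))|) := by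
          apply mul_le_mul_of_nonneg_left
          · apply mul_le_mul_of_nonneg_left (lemB hq0 hq1)
            exact le_trans zero_le_one (le_max_left _ _)
          · positivity
      _ = _ := by ring
  have key := mul_le_mul hA hB (abs_nonneg _) (by positivity)
  calc |1 - q ^ (α + (j:ℝ))| * |1 - q ^ (β + (j:ℝ))| ≤ _ := key
    _ = Dfac α β γ j * (|1 - q ^ ((j:ℝ)+1)| * |1 - q ^ (γ + (j:ℝ))|) := by
        rw [abs_of_nonneg hd1, Dfac]; ring

lemma R_bound {α β γ q : ℝ} (hγ : ∀ n : ℕ, γ ≠ -(n : ℝ)) (hq : 1/2 ≤ q) (hq1 : q < 1) (n : ℕ) :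
    |Pq α n q * Pq β n q / (Pq 1 n q * Pq γ n q)| ≤ ∏ j ∈ Finset.range n, Dfac α β γ j := by
  have hq0 : (0:ℝ) < q := by linarith
  have hγj : ∀ j : ℕ, γ + (j:ℝ) ≠ 0 := fun j h => hγ j (by linarith)
  have hden : ∀ j : ℕ, (1 - q * q ^ j) * (1 - q ^ γ * q ^ j) ≠ 0 := by
    intro j
    apply mul_ne_zero
    · have : q * q ^ j < 1 := by
        calc q * q ^ j ≤ q * 1 := by
              apply mul_le_mul_of_nonneg_left _ hq0.le
              exact pow_le_one₀ hq0.le hq1.le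
          _ < 1 := by linarith
      linarith
    · have : q ^ γ * q ^ j ≠ 1 := by
        rw [show q ^ γ * q ^ j = q ^ (γ + (j:ℝ)) by rw [Real.rpow_add hq0, Real.rpow_natCast]]
        exact rpow_ne_one' hq0 hq1 (hγj j)
      intro h; apply this; linarith [sub_eq_zero.mp h]
  have hdenp : 0 < |Pq 1 n q * Pq γ n q| := by
    rw [abs_pos, Pq, Pq, ← Finset.prod_mul_distrib]
    · rw [Finset.prod_ne_zero_iff]
      intro j _
      have := hden j
      rw [Real.rpow_one]
      exact this
  rw [abs_div, div_le_iff₀ hdenp]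
  have expand : Pq 1 n q * Pq γ n q = ∏ j ∈ Finset.range n, ((1 - q * q ^ j) * (1 - q ^ γ * q ^ j)) := by
    rw [Pq, Pq, ← Finset.prod_mul_distrib, Real.rpow_one]
  have expand2 : Pq α n q * Pq β n q = ∏ j ∈ Finset.range n, ((1 - q ^ α * q ^ j) * (1 - q ^ β * q ^ j)) := by
    rw [Pq, Pq, ← Finset.prod_mul_distrib]
  rw [expand, expand2, Finset.abs_prod, Finset.abs_prod, ← Finset.prod_mul_distrib]
  apply Finset.prod_le_prod (fun j _ => abs_nonneg _)
  intro j _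
  exact factor_bound j (hγj j) hq hq1

lemma ratio_tendsto (c d : ℝ) :
    Tendsto (fun n : ℕ => (c + (n:ℝ)) / (d + (n:ℝ))) atTop (nhds 1) := by
  have hd : Tendsto (fun n : ℕ => d + (n:ℝ)) atTop atTop :=
    tendsto_atTop_add_const_left atTop d tendsto_natCast_atTop_atTop
  have h0 : Tendsto (fun n : ℕ => (c - d) / (d + (n:ℝ))) atTop (nhds 0) :=
    Tendsto.div_atTop tendsto_const_nhds hd
  have h1 : Tendsto (fun n : ℕ => 1 + (c - d) / (d + (n:ℝ))) atTop (nhds 1) := by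
    simpa using h0.const_add 1
  refine Filter.Tendsto.congr' ?_ h1
  filter_upwards [hd.eventually_ge_atTop 1] with n hn
  have : d + (n:ℝ) ≠ 0 := by linarith
  field_simp
  ring

lemma pow2_tendsto (s : ℝ) :
    Tendsto (fun n : ℕ => (2:ℝ) ^ (|s + (n:ℝ)| - (s + n))) atTop (nhds 1) := by
  refine Filter.Tendsto.congr' ?_ (tendsto_const_nhds (x := (1:ℝ)))
  filter_upwards [tendsto_natCast_atTop_atTop.eventually_ge_atTop (-s)] with n hn
  rw [abs_of_nonneg (by linarith), sub_self, Real.rpow_zero]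

lemma max_tendsto {f : ℕ → ℝ} (h : Tendsto f atTop (nhds 1)) :
    Tendsto (fun n => max 1 (f n)) atTop (nhds 1) := by
  have := (tendsto_const_nhds (x := (1:ℝ)) (f := atTop (α := ℕ))).max h
  rwa [max_self] at this

lemma Dfac_tendsto (α β γ : ℝ) : Tendsto (fun n : ℕ => Dfac α β γ n) atTop (nhds 1) := by
  have h2 : Tendsto (fun n : ℕ => max 1 (|α + (n:ℝ)| / ((n:ℝ) + 1))) atTop (nhds 1) := by
    apply max_tendsto
    refine Filter.Tendsto.congr' ?_ (ratio_tendsto α 1)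
    filter_upwards [tendsto_natCast_atTop_atTop.eventually_ge_atTop (-α)] with n hn
    rw [abs_of_nonneg (by linarith), add_comm (1:ℝ) (n:ℝ)]
  have h4 : Tendsto (fun n : ℕ => max 1 (|β + (n:ℝ)| / |γ + (n:ℝ)|)) atTop (nhds 1) := by
    apply max_tendsto
    refine Filter.Tendsto.congr' ?_ (ratio_tendsto β γ)
    filter_upwards [tendsto_natCast_atTop_atTop.eventually_ge_atTop (-β),
      tendsto_natCast_atTop_atTop.eventually_ge_atTop (-γ)] with n hn1 hn2
    rw [abs_of_nonneg (by linarith), abs_of_nonneg (by linarith)]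
  have := ((pow2_tendsto α).mul h2).mul ((pow2_tendsto β).mul h4)
  simpa [Dfac] using this

lemma bound_summable (α β γ : ℝ) {r : ℝ} (hr0 : 0 < r) (hr1 : r < 1) :
    Summable (fun n : ℕ => (∏ j ∈ Finset.range n, Dfac α β γ j) * r ^ n) := by
  have hpos : ∀ n : ℕ, 0 < (∏ j ∈ Finset.range n, Dfac α β γ j) * r ^ n := by
    intro n
    exact mul_pos (Finset.prod_pos fun j _ => Dfac_pos α β γ j) (pow_pos hr0 n)
  apply summable_of_ratio_test_tendsto_lt_one hr1
    (Eventually.of_forall fun n => (hpos n).ne')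
  have key : ∀ n : ℕ,
      ‖(∏ j ∈ Finset.range (n+1), Dfac α β γ j) * r ^ (n+1)‖ /
        ‖(∏ j ∈ Finset.range n, Dfac α β γ j) * r ^ n‖ = Dfac α β γ n * r := by
    intro n
    rw [Real.norm_eq_abs, Real.norm_eq_abs, abs_of_pos (hpos _), abs_of_pos (hpos _),
      Finset.prod_range_succ, pow_succ]
    rw [show (∏ j ∈ Finset.range n, Dfac α β γ j) * Dfac α β γ n * (r ^ n * r)
        = ((∏ j ∈ Finset.range n, Dfac α β γ j) * r ^ n) * (Dfac α β γ n * r) by ring]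
    exact mul_div_cancel_left₀ _ (hpos n).ne'
  refine Filter.Tendsto.congr (fun n => (key n).symm) ?_
  simpa using (Dfac_tendsto α β γ).mul_const r

end Stmt7Aux

open Stmt7Aux

/-- Termwise q → 1⁻ limit of ₂φ₁ towards ₂F₁. -/
theorem stmt_7 (α β γ : ℝ) (hγ : ∀ n : ℕ, γ ≠ -(n : ℝ)) (x : ℂ) (hx : ‖x‖ < 1) :
    Filter.Tendsto
      (fun q : ℝ =>
        phi21 ((q ^ α : ℝ) : ℂ) ((q ^ β : ℝ) : ℂ) ((q ^ γ : ℝ) : ℂ) (q : ℂ) x)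
      (nhdsWithin 1 (Set.Ioo (0 : ℝ) 1))
      (nhds (F21 (α : ℂ) (β : ℂ) (γ : ℂ) x)) := by
  have hfun : ∀ q : ℝ, phi21 ((q ^ α : ℝ) : ℂ) ((q ^ β : ℝ) : ℂ) ((q ^ γ : ℝ) : ℂ) (q : ℂ) x
      = ∑' n : ℕ, ((Pq α n q * Pq β n q / (Pq 1 n q * Pq γ n q) : ℝ) : ℂ) * x ^ n := by
    intro q
    unfold phi21
    congr 1
    funext n
    rw [qPoch_cast, qPoch_cast, qPoch_cast, qPoch_cast']
    push_cast
    ring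
  have hF : F21 (α : ℂ) (β : ℂ) (γ : ℂ) x
      = ∑' n : ℕ, (((∏ j ∈ Finset.range n, (α + j)) * (∏ j ∈ Finset.range n, (β + j)) /
        ((∏ j ∈ Finset.range n, ((1:ℝ) + j)) * (∏ j ∈ Finset.range n, (γ + j))) : ℝ) : ℂ) * x ^ n := by
    unfold F21
    congr 1
    funext n
    rw [risingC_cast, risingC_cast, risingC_cast]
    have hfact : ((n.factorial : ℕ) : ℝ) = ∏ j ∈ Finset.range n, ((1:ℝ) + j) := by
      rw [← Finset.prod_range_add_one_eq_factorial]
      push_cast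
      exact Finset.prod_congr rfl fun j _ => by ring
    have : ((n.factorial : ℕ) : ℂ) = (((∏ j ∈ Finset.range n, ((1:ℝ) + j) : ℝ)) : ℂ) := by
      rw [← hfact]; push_cast; ring
    rw [this]
    push_cast
    ring
  simp only [hfun]
  rw [hF]
  set r : ℝ := (1 + ‖x‖) / 2 with hr
  have hr0 : 0 < r := by positivity
  have hxr : ‖x‖ ≤ r := by rw [hr]; linarith
  have hr1 : r < 1 := by rw [hr]; linarith
  apply tendsto_tsum_of_dominated_convergence
    (bound := fun n : ℕ => (∏ j ∈ Finset.range n, Dfac α β γ j) * r ^ n)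
    (bound_summable α β γ hr0 hr1)
  · intro n
    exact ((Complex.continuous_ofReal.tendsto _).comp (tendsto_R α β γ hγ n)).mul_const _
  · have hhalf : ∀ᶠ q : ℝ in nhdsWithin 1 (Set.Ioo (0:ℝ) 1), 1/2 ≤ q :=
      ((eventually_ge_nhds (by norm_num : (1:ℝ)/2 < 1)).filter_mono nhdsWithin_le_nhds)
    filter_upwards [self_mem_nhdsWithin, hhalf] with q hq hq2
    intro n
    rw [norm_mul, norm_pow, Complex.norm_real, Real.norm_eq_abs]
    apply mul_le_mul (R_bound hγ hq2 hq.2 n) (pow_le_pow_left₀ (norm_nonneg x) hxr n)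
      (by positivity) (Finset.prod_nonneg fun j _ => (Dfac_pos α β γ j).le)
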